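/- Let $h$ be a $K$-strongly convex regularizer on a normed space with mirror map $Q$ and Fenchel coupling $F$ as above. Then for all $x \in \mathrm{dom}\,h$, all $y \in V^*$, and all $w \in V^*$, with $q = Q(y)$: $F(x, y + w) \le F(x, y) + \langle w, q - x\rangle + \tfrac{1}{2K}\|w\|_*^2$, where $\|\cdot\|_*$ is the dual norm. -/

import Mathlib

/-- one-step bound on the Fenchel coupling after a dual step `w`. -/
theorem fenchel_coupling_step_bound
    {V : Type*} [NormedAddCommGroup V] [NormedSpace ℝ V]
    (D : Set V) (hD : D.Nonempty)
    (h : V → ℝ) (K : ℝ) (hK : 0 < K)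
    (hconv : ConvexOn ℝ D h)
    -- `K`-strong convexity of `h` on its domain `D`
    (hstrong : ∀ x ∈ D, ∀ x' ∈ D, ∀ t ∈ Set.Icc (0:ℝ) 1,
      h (t • x + (1 - t) • x')
        ≤ t * h x + (1 - t) * h x' - (K / 2) * t * (1 - t) * ‖x - x'‖ ^ 2)
    (hstar : (V →L[ℝ] ℝ) → ℝ) (Q : (V →L[ℝ] ℝ) → V)
    (hQmem : ∀ y, Q y ∈ D)
    (hsup : ∀ y, ∀ x ∈ D, y x - h x ≤ hstar y)
    (hatt : ∀ y, hstar y = y (Q y) - h (Q y)) :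
    ∀ x ∈ D, ∀ y w : V →L[ℝ] ℝ,
      h x + hstar (y + w) - (y + w) x
        ≤ (h x + hstar y - y x) + w (Q y - x) + (1 / (2 * K)) * ‖w‖ ^ 2 := by
  intro x hx y w
  set p := Q (y + w) with hp
  set q := Q y with hq
  have hpD : p ∈ D := hQmem (y + w)
  have hqD : q ∈ D := hQmem y
  -- strong growth of h - y at its minimizer q
  have growth : h q - y q + (K/2) * ‖p - q‖^2 ≤ h p - y p := by
    have key : ∀ t ∈ Set.Ioc (0:ℝ) 1,
        (K/2) * (1 - t) * ‖p - q‖^2 ≤ (h p - y p) - (h q - y q) := by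
      intro t ht
      have hz : t • p + (1 - t) • q ∈ D :=
        hconv.1 hpD hqD (le_of_lt ht.1) (by linarith [ht.2]) (by ring)
      have h1 := hstrong p hpD q hqD t ⟨le_of_lt ht.1, ht.2⟩
      have h2 : h q - y q ≤ h (t • p + (1-t) • q) - y (t • p + (1-t) • q) := by
        have := hsup y _ hz
        rw [hatt y] at this
        linarith
      have h3 : y (t • p + (1-t) • q) = t * y p + (1-t) * y q := by
        simp [map_add, map_smul, smul_eq_mul]
      rw [h3] at h2
      nlinarith [ht.1]
    have htend : Filter.Tendsto (fun t : ℝ => (K/2) * (1 - t) * ‖p - q‖^2)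
        (nhdsWithin 0 (Set.Ioi 0)) (nhds ((K/2) * (1 - 0) * ‖p - q‖^2)) := by
      apply Filter.Tendsto.mono_left _ nhdsWithin_le_nhds
      exact Continuous.tendsto (by continuity) 0
    have hlim : (K/2) * (1 - 0) * ‖p - q‖^2 ≤ (h p - y p) - (h q - y q) := by
      refine le_of_tendsto htend ?_
      filter_upwards [Ioc_mem_nhdsGT_of_mem (Set.left_mem_Ico.mpr one_pos)] with t ht
      exact key t ht
    nlinarith [hlim]
  -- Young's inequality
  have young : w (p - q) ≤ (K/2) * ‖p - q‖^2 + (1/(2*K)) * ‖w‖^2 := by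
    have h1 : w (p - q) ≤ ‖w‖ * ‖p - q‖ := by
      calc w (p - q) ≤ |w (p - q)| := le_abs_self _
        _ = ‖w (p - q)‖ := (Real.norm_eq_abs _).symm
        _ ≤ ‖w‖ * ‖p - q‖ := w.le_opNorm _
    have h3 : (0:ℝ) ≤ (1/(2*K)) * ((K * ‖p - q‖ - ‖w‖)^2) := by positivity
    have h4 : (1/(2*K)) * ((K * ‖p - q‖ - ‖w‖)^2)
        = (K/2) * ‖p - q‖^2 + (1/(2*K)) * ‖w‖^2 - ‖w‖ * ‖p - q‖ := by
      field_simp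
      ring
    linarith [h4 ▸ h3]
  have e1 : hstar (y + w) = y p + w p - h p := by
    rw [hatt (y + w)]; simp only [ContinuousLinearMap.add_apply]; rfl
  have e2 : hstar y = y q - h q := hatt y
  have e3 : w (p - q) = w p - w q := map_sub w p q
  have e4 : w (q - x) = w q - w x := map_sub w q x
  have e5 : (y + w) x = y x + w x := rfl
  rw [e1, e2, e4, e5]
  rw [e3] at young
  linarith [growth, young]
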